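/- arXiv:0812.2423 — 2 statements merged into one kernel-verified Lean document; each statement's English description precedes it below -/
import Mathlib

section
/- Let W be a (possibly infinite) nested word and r ∈ ℕ. Define two positions i, i' to have an r-overlap if the r-spheres of W around i and i' are isomorphic and the Gaifman distance between i and i' is at most 2r+1. Then the overlap graph (vertices: positions; edges: r-overlapping distinct pairs) has degree at most 4·M², where M is the maximal number of positions within Gaifman distance r of a fixed position. Consequently, there is a proper coloring χ of the positions with 4·M²+1 colors such that distinct r-overlapping positions receive distinct colors. -/
/-- The *kind* of a letter in a `K`-stack call-return alphabet: a call of some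
stack `s`, a return of some stack `s`, or an internal action. -/
inductive CRKind (K : ℕ) where
  | call (s : Fin K)
  | ret (s : Fin K)
  | int

/-- A `K`-stack call-return alphabet over the letters `A`: every letter is
(exclusively) a call of one stack, a return of one stack, or internal.  This
encodes the pairwise disjointness of the collection
`⟨{(Σ_c^s, Σ_r^s)}_{s∈[K]}, Σ_int⟩` together with `Σ` being their union. -/
structure CRAlphabet (K : ℕ) (A : Type) where
  kind : A → CRKind K

namespace CRAlphabet

variable {K : ℕ} {A : Type}

def callSet (h : CRAlphabet K A) (s : Fin K) : Set A := {a | h.kind a = .call s}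
def retSet (h : CRAlphabet K A) (s : Fin K) : Set A := {a | h.kind a = .ret s}
def intSet (h : CRAlphabet K A) : Set A := {a | h.kind a = .int}

end CRAlphabet

/-- `s`-well-formed strings: generated by the grammar
`A ::= aAb | AA | ε | c` with `a ∈ c`, `b ∈ r`, `c ∉ c ∪ r`. -/
inductive SWellFormed {A : Type} (c r : Set A) : List A → Prop where
  | nil : SWellFormed c r []
  | single {x : A} : x ∉ c → x ∉ r → SWellFormed c r [x]
  | wrap {a b : A} {u : List A} : a ∈ c → b ∈ r → SWellFormed c r u →
      SWellFormed c r (a :: u ++ [b])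
  | concat {u v : List A} : SWellFormed c r u → SWellFormed c r v →
      SWellFormed c r (u ++ v)

/-- The matching relation `μ^s` of the nested word determined by the string
`w` (positions `0`-based): `(i,j) ∈ μ^s` iff `i < j`, `λ(i) ∈ Σ_c^s`,
`λ(j) ∈ Σ_r^s` and `λ(i+1) … λ(j-1)` is `s`-well formed. -/
def Matched {K : ℕ} {A : Type} (h : CRAlphabet K A) (w : List A) (s : Fin K)
    (i j : ℕ) : Prop :=
  i < j ∧ j < w.length ∧
  (∃ a, w[i]? = some a ∧ a ∈ h.callSet s) ∧
  (∃ b, w[j]? = some b ∧ b ∈ h.retSet s) ∧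
  SWellFormed (h.callSet s) (h.retSet s) ((w.take j).drop (i + 1))

/-- The full matching relation `μ = ⋃_s μ^s`. -/
def MuAny {K : ℕ} {A : Type} (h : CRAlphabet K A) (w : List A) (i j : ℕ) : Prop :=
  ∃ s, Matched h w s i j

/-- Lift a set of letters to a set of optional letters. -/
def somes {A : Type} (S : Set A) : Set (Option A) := {o | ∃ a ∈ S, o = some a}

/-- A (possibly infinite) nested word is given by a labeling
`lab : ℕ → Option A` whose domain (the positions, where `lab i ≠ none`) is
downward closed; this covers both the finite domains `[n]` and the infinite
domain `ℕ`.  `OMatched` is its matching relation `μ^s`. -/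
def OMatched {K : ℕ} {A : Type} (h : CRAlphabet K A) (lab : ℕ → Option A)
    (s : Fin K) (i j : ℕ) : Prop :=
  i < j ∧ lab i ∈ somes (h.callSet s) ∧ lab j ∈ somes (h.retSet s) ∧
  SWellFormed (somes (h.callSet s)) (somes (h.retSet s))
    ((List.range (j - (i + 1))).map fun k => lab (i + 1 + k))

/-- Gaifman adjacency for possibly infinite nested words. -/
def OAdj {K : ℕ} {A : Type} (h : CRAlphabet K A) (lab : ℕ → Option A)
    (i j : ℕ) : Prop :=
  (j = i + 1 ∧ lab j ≠ none) ∨ (i = j + 1 ∧ lab i ≠ none) ∨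
    (∃ s, OMatched h lab s i j ∨ OMatched h lab s j i)

/-- Gaifman distance at most `d`. -/
def ODistLE {K : ℕ} {A : Type} (h : CRAlphabet K A) (lab : ℕ → Option A) :
    ℕ → ℕ → ℕ → Prop
  | 0, i, j => i = j
  | d + 1, i, j => i = j ∨ ∃ k, OAdj h lab i k ∧ ODistLE h lab d k j

/-- The ball of radius `r` around `i`. -/
def oball {K : ℕ} {A : Type} (h : CRAlphabet K A) (lab : ℕ → Option A)
    (r i : ℕ) : Set ℕ :=
  {j | ODistLE h lab r i j}

/-- The `r`-spheres around `i` and `i'` (in the same word) are isomorphic: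
some bijection of the balls maps center to center and preserves labels,
successor edges and matching edges. -/
def OSphIso {K : ℕ} {A : Type} (h : CRAlphabet K A) (lab : ℕ → Option A)
    (r i i' : ℕ) : Prop :=
  ∃ f : ℕ → ℕ, f i = i' ∧ Set.BijOn f (oball h lab r i) (oball h lab r i') ∧
    (∀ j ∈ oball h lab r i, lab j = lab (f j)) ∧
    (∀ j ∈ oball h lab r i, ∀ k ∈ oball h lab r i,
      ((k = j + 1 ∧ lab k ≠ none) ↔ (f k = f j + 1 ∧ lab (f k) ≠ none)) ∧
      (∀ s, OMatched h lab s j k ↔ OMatched h lab s (f j) (f k)))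

/-- `i` and `i'` have an `r`-overlap: isomorphic `r`-spheres and Gaifman
distance at most `2r+1`. -/
def Overlap {K : ℕ} {A : Type} (h : CRAlphabet K A) (lab : ℕ → Option A)
    (r i i' : ℕ) : Prop :=
  OSphIso h lab r i i' ∧ ODistLE h lab (2 * r + 1) i i'

open Classical in
noncomputable def cnt {A : Type} (S : Set A) (u : List A) : ℕ :=
  u.countP (fun x => decide (x ∈ S))

open Classical

lemma cnt_nil {A : Type} (S : Set A) : cnt S [] = 0 := rfl

lemma cnt_cons {A : Type} (S : Set A) (x : A) (u : List A) :
    cnt S (x :: u) = cnt S u + (if x ∈ S then 1 else 0) := by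
  simp [cnt, List.countP_cons]

lemma cnt_append {A : Type} (S : Set A) (u v : List A) :
    cnt S (u ++ v) = cnt S u + cnt S v := by
  simp [cnt, List.countP_append]

lemma cnt_singleton_mem {A : Type} {S : Set A} {x : A} (h : x ∈ S) : cnt S [x] = 1 := by
  simp [cnt_cons, cnt_nil, h]

lemma cnt_singleton_not_mem {A : Type} {S : Set A} {x : A} (h : x ∉ S) : cnt S [x] = 0 := by
  simp [cnt_cons, cnt_nil, h]

lemma swf_balance {A : Type} {c r : Set A} (hd : ∀ x, x ∈ c → x ∉ r) {u : List A}
    (h : SWellFormed c r u) : cnt c u = cnt r u := by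
  induction h with
  | nil => rfl
  | single hx hy => rw [cnt_singleton_not_mem hx, cnt_singleton_not_mem hy]
  | wrap ha hb hu ih =>
    rename_i a b u
    have har : a ∉ r := hd a ha
    have hbc : b ∉ c := fun hbc => hd b hbc hb
    simp only [cnt_cons, cnt_append, cnt_singleton_mem hb, cnt_singleton_not_mem hbc,
      if_pos ha, if_neg har, ih]
  | concat hu hv ihu ihv => simp [cnt_append, ihu, ihv]

lemma swf_prefix {A : Type} {c r : Set A} (hd : ∀ x, x ∈ c → x ∉ r) {u : List A}
    (h : SWellFormed c r u) : ∀ p q : List A, u = p ++ q → cnt r p ≤ cnt c p := by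
  induction h with
  | nil =>
    intro p q hpq
    have : p = [] := by
      cases p with
      | nil => rfl
      | cons x xs => simp at hpq
    subst this; simp [cnt_nil]
  | single hx hy =>
    rename_i x
    intro p q hpq
    cases p with
    | nil => simp [cnt_nil]
    | cons y ys =>
      simp only [List.cons_append, List.cons.injEq] at hpq
      obtain ⟨rfl, h2⟩ := hpq
      have : ys = [] := by
        cases ys with
        | nil => rfl
        | cons z zs => simp at h2
      subst this
      rw [cnt_singleton_not_mem hy]
      exact Nat.zero_le _
  | wrap ha hb hu ih =>
    rename_i a b u
    intro p q hpq
    cases p with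
    | nil => simp [cnt_nil]
    | cons y p' =>
      simp only [List.cons_append, List.cons.injEq] at hpq
      obtain ⟨rfl, h2⟩ := hpq
      have hbal := swf_balance hd hu
      have hac : a ∈ c := ha
      have hanr : a ∉ r := hd a ha
      have hbc : b ∉ c := fun hbc => hd b hbc hb
      rw [cnt_cons, cnt_cons, if_pos hac, if_neg hanr]
      rcases List.append_eq_append_iff.mp h2.symm with ⟨a', ha1, ha2⟩ | ⟨c', hc1, hc2⟩
      · -- u = p' ++ a', [b] = a' ++ q ?? check shape
        have := ih p' a' ha1
        omega
      · -- hc1 : p' = u ++ c', hc2 : [b] = c' ++ q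
        cases c' with
        | nil =>
          simp only [List.append_nil] at hc1
          subst hc1
          omega
        | cons z zs =>
          have hz : z = b ∧ zs = [] := by
            cases zs with
            | nil => simp_all
            | cons w ws => simp at hc2
          obtain ⟨rfl, rfl⟩ := hz
          subst hc1
          rw [cnt_append, cnt_append, cnt_singleton_mem hb, cnt_singleton_not_mem hbc]
          omega
  | concat hu hv ihu ihv =>
    rename_i u v
    intro p q hpq
    rcases List.append_eq_append_iff.mp hpq.symm with ⟨a', ha1, ha2⟩ | ⟨c', hc1, hc2⟩
    · exact ihu p a' ha1
    · have hbal := swf_balance hd hu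
      subst hc1
      have := ihv c' q hc2
      rw [cnt_append, cnt_append]
      omega

lemma swf_suffix {A : Type} {c r : Set A} (hd : ∀ x, x ∈ c → x ∉ r) {u : List A}
    (h : SWellFormed c r u) : ∀ p q : List A, u = p ++ q → cnt c q ≤ cnt r q := by
  intro p q hpq
  have hb := swf_balance hd h
  have hp := swf_prefix hd h p q hpq
  subst hpq
  rw [cnt_append, cnt_append] at hb
  omega


lemma range_map_split {B : Type*} (f : ℕ → B) (n m : ℕ) :
    (List.range (n + 1 + m)).map f
      = ((List.range n).map f ++ [f n]) ++ (List.range m).map (fun k => f (n + 1 + k)) := by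
  rw [List.range_add, List.map_append, List.map_map, List.range_succ, List.map_append]
  rfl

section NW
variable {K : ℕ} {A : Type} {h : CRAlphabet K A} {lab : ℕ → Option A}

lemma somes_disj (h : CRAlphabet K A) (s : Fin K) :
    ∀ x, x ∈ somes (h.callSet s) → x ∉ somes (h.retSet s) := by
  rintro x ⟨a, ha, rfl⟩ ⟨b, hb, hab⟩
  obtain rfl : a = b := Option.some_injective _ hab
  simp [CRAlphabet.callSet, CRAlphabet.retSet] at ha hb
  rw [ha] at hb
  cases hb

lemma call_stack_eq {s s' : Fin K} {i : ℕ} (h1 : lab i ∈ somes (h.callSet s))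
    (h2 : lab i ∈ somes (h.callSet s')) : s = s' := by
  obtain ⟨a, ha, hea⟩ := h1
  obtain ⟨b, hb, heb⟩ := h2
  rw [hea] at heb
  obtain rfl : a = b := Option.some_injective _ heb
  simp [CRAlphabet.callSet] at ha hb
  rw [ha] at hb
  exact CRKind.call.inj hb

lemma ret_stack_eq {s s' : Fin K} {i : ℕ} (h1 : lab i ∈ somes (h.retSet s))
    (h2 : lab i ∈ somes (h.retSet s')) : s = s' := by
  obtain ⟨a, ha, hea⟩ := h1
  obtain ⟨b, hb, heb⟩ := h2
  rw [hea] at heb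
  obtain rfl : a = b := Option.some_injective _ heb
  simp [CRAlphabet.retSet] at ha hb
  rw [ha] at hb
  exact CRKind.ret.inj hb

lemma call_ret_clash {s s' : Fin K} {i : ℕ} (h1 : lab i ∈ somes (h.callSet s))
    (h2 : lab i ∈ somes (h.retSet s')) : False := by
  obtain ⟨a, ha, hea⟩ := h1
  obtain ⟨b, hb, heb⟩ := h2
  rw [hea] at heb
  obtain rfl : a = b := Option.some_injective _ heb
  simp [CRAlphabet.callSet, CRAlphabet.retSet] at ha hb
  rw [ha] at hb
  cases hb

/-- a call position has at most one matching return. -/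
lemma no_two_rets {s : Fin K} {i j j' : ℕ} (h1 : OMatched h lab s i j)
    (h2 : OMatched h lab s i j') (hlt : j < j') : False := by
  obtain ⟨hij, hic, hjr, hwf⟩ := h1
  obtain ⟨hij', -, hjr', hwf'⟩ := h2
  have hd := somes_disj h s
  set f : ℕ → Option A := fun k => lab (i + 1 + k) with hf
  have hnn : j' - (i + 1) = (j - (i+1)) + 1 + (j' - (j + 1)) := by omega
  rw [hnn, range_map_split] at hwf'
  have hfn : f (j - (i+1)) = lab j := by simp only [hf]; congr 1; omega
  have hpre := swf_prefix hd hwf' _ _ rfl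
  have hbal := swf_balance hd hwf
  rw [cnt_append, cnt_append, hfn, cnt_singleton_mem hjr,
    cnt_singleton_not_mem (fun hc => hd _ hc hjr)] at hpre
  omega

/-- a return position has at most one matching call. -/
lemma no_two_calls {s : Fin K} {i j j' : ℕ} (h1 : OMatched h lab s j i)
    (h2 : OMatched h lab s j' i) (hlt : j < j') : False := by
  obtain ⟨hij, hjc, hir, hwf⟩ := h1
  obtain ⟨hij', hjc', -, hwf'⟩ := h2
  have hd := somes_disj h s
  set f : ℕ → Option A := fun k => lab (j + 1 + k) with hf
  have hnn : i - (j + 1) = (j' - (j+1)) + 1 + (i - (j' + 1)) := by omega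
  rw [hnn, range_map_split] at hwf
  have hfn : f (j' - (j+1)) = lab j' := by simp only [hf]; congr 1; omega
  -- suffix = [lab j'] ++ L'
  have hsuf := swf_suffix hd hwf ((List.range (j' - (j+1))).map f)
      ([f (j' - (j+1))] ++ (List.range (i - (j'+1))).map (fun k => f (j' - (j+1) + 1 + k)))
      (by rw [← List.append_assoc])
  have hL' : (List.range (i - (j'+1))).map (fun k => f (j' - (j+1) + 1 + k))
      = (List.range (i - (j'+1))).map (fun k => lab (j' + 1 + k)) := by
    apply List.map_congr_left
    intro k _
    simp only [hf]
    congr 1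
    omega
  have hbal := swf_balance hd hwf'
  rw [cnt_append, cnt_append, hfn, cnt_singleton_mem hjc',
    cnt_singleton_not_mem (fun hc => hd _ hjc' hc), hL'] at hsuf
  omega
end NW

section Dist
variable {K : ℕ} {A : Type} {h : CRAlphabet K A} {lab : ℕ → Option A}

def Partner (h : CRAlphabet K A) (lab : ℕ → Option A) (i j : ℕ) : Prop :=
  ∃ s, OMatched h lab s i j ∨ OMatched h lab s j i

lemma partner_unique {i j j' : ℕ} (h1 : Partner h lab i j) (h2 : Partner h lab i j') :
    j = j' := by
  obtain ⟨s, h1⟩ := h1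
  obtain ⟨s', h2⟩ := h2
  rcases h1 with h1 | h1 <;> rcases h2 with h2 | h2
  · obtain rfl : s = s' := call_stack_eq h1.2.1 h2.2.1
    rcases lt_trichotomy j j' with hl | hl | hl
    · exact absurd (no_two_rets h1 h2 hl) not_false
    · exact hl
    · exact absurd (no_two_rets h2 h1 hl) not_false
  · exact absurd (call_ret_clash h1.2.1 h2.2.2.1) not_false
  · exact absurd (call_ret_clash h2.2.1 h1.2.2.1) not_false
  · obtain rfl : s = s' := ret_stack_eq h1.2.2.1 h2.2.2.1
    rcases lt_trichotomy j j' with hl | hl | hl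
    · exact absurd (no_two_calls h1 h2 hl) not_false
    · exact hl
    · exact absurd (no_two_calls h2 h1 hl) not_false

lemma oadj_symm {i j : ℕ} (hij : OAdj h lab i j) : OAdj h lab j i := by
  rcases hij with h1 | h1 | ⟨s, h1⟩
  · exact Or.inr (Or.inl h1)
  · exact Or.inl h1
  · exact Or.inr (Or.inr ⟨s, h1.symm⟩)

lemma oadj_lab (hdc : ∀ i j, i ≤ j → lab j ≠ none → lab i ≠ none)
    {i j : ℕ} (hij : OAdj h lab i j) : lab j ≠ none := by
  rcases hij with h1 | h1 | ⟨s, ⟨-, -, hr, -⟩ | ⟨-, hc, -, -⟩⟩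
  · exact h1.2
  · exact hdc j (j+1) (Nat.le_succ j) (h1.1 ▸ h1.2)
  · obtain ⟨b, -, hb⟩ := hr; rw [hb]; simp
  · obtain ⟨b, -, hb⟩ := hc; rw [hb]; simp

lemma oadj_sub {i j : ℕ} (hij : OAdj h lab i j) :
    j = i + 1 ∨ j + 1 = i ∨ Partner h lab i j := by
  rcases hij with h1 | h1 | h1
  · exact Or.inl h1.1
  · exact Or.inr (Or.inl h1.1.symm)
  · exact Or.inr (Or.inr h1)

lemma odist_refl : ∀ (d i : ℕ), ODistLE h lab d i i
  | 0, i => rfl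
  | d + 1, i => Or.inl rfl

lemma odist_succ {d : ℕ} : ∀ {i j : ℕ}, ODistLE h lab d i j → ODistLE h lab (d+1) i j := by
  induction d with
  | zero => intro i j hd; exact Or.inl hd
  | succ d ih =>
    intro i j hd
    rcases hd with rfl | ⟨k, hk, hkj⟩
    · exact Or.inl rfl
    · exact Or.inr ⟨k, hk, ih hkj⟩

lemma odist_concat : ∀ (a : ℕ) {b i k j : ℕ}, ODistLE h lab a i k → ODistLE h lab b k j →
    ODistLE h lab (a + b) i j := by
  intro a
  induction a with
  | zero => intro b i k j h1 h2; rwa [h1, Nat.zero_add]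
  | succ a ih =>
    intro b i k j h1 h2
    have : a + 1 + b = (a + b) + 1 := by omega
    rw [this]
    rcases h1 with rfl | ⟨m, hm, hmk⟩
    · exact odist_succ (ih (odist_refl a i) h2)
    · exact Or.inr ⟨m, hm, ih hmk h2⟩

lemma odist_split : ∀ (a : ℕ) {b i j : ℕ}, ODistLE h lab (a + b) i j →
    ∃ k, ODistLE h lab a i k ∧ ODistLE h lab b k j := by
  intro a
  induction a with
  | zero => intro b i j hd; exact ⟨i, rfl, by rwa [Nat.zero_add] at hd⟩
  | succ a ih =>
    intro b i j hd
    have he : a + 1 + b = (a + b) + 1 := by omega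
    rw [he] at hd
    rcases hd with rfl | ⟨m, hm, hmj⟩
    · exact ⟨i, odist_refl _ _, odist_refl _ _⟩
    · obtain ⟨k, hk1, hk2⟩ := ih hmj
      exact ⟨k, Or.inr ⟨m, hm, hk1⟩, hk2⟩

lemma odist_snoc {d i k j : ℕ} (h1 : ODistLE h lab d i k) (h2 : OAdj h lab k j) :
    ODistLE h lab (d + 1) i j :=
  odist_concat d h1 (Or.inr ⟨j, h2, rfl⟩)

lemma odist_symm : ∀ (d : ℕ) {i j : ℕ}, ODistLE h lab d i j → ODistLE h lab d j i := by
  intro d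
  induction d with
  | zero => intro i j hd; exact hd.symm
  | succ d ih =>
    intro i j hd
    rcases hd with rfl | ⟨k, hk, hkj⟩
    · exact Or.inl rfl
    · exact odist_snoc (ih hkj) (oadj_symm hk)

lemma oball_lab (hdc : ∀ i j, i ≤ j → lab j ≠ none → lab i ≠ none) :
    ∀ (d : ℕ) {i j : ℕ}, lab i ≠ none → j ∈ oball h lab d i → lab j ≠ none := by
  intro d
  induction d with
  | zero => intro i j hi hj; rwa [← hj]
  | succ d ih =>
    intro i j hi hj
    rcases hj with rfl | ⟨k, hk, hkj⟩
    · exact hi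
    · exact ih (oadj_lab hdc hk) hkj

lemma partner_subsingleton (i : ℕ) : {j | Partner h lab i j}.Subsingleton := by
  intro a ha b hb
  exact partner_unique ha hb

lemma nbhd_sub (i : ℕ) : {j | OAdj h lab i j} ⊆ {i + 1} ∪ {j | j + 1 = i} ∪ {j | Partner h lab i j} := by
  intro j hj
  rcases oadj_sub hj with h1 | h1 | h1
  · exact Or.inl (Or.inl h1)
  · exact Or.inl (Or.inr h1)
  · exact Or.inr h1

lemma nbhd_finite (i : ℕ) : {j | OAdj h lab i j}.Finite := by
  apply Set.Finite.subset _ (nbhd_sub i)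
  apply Set.Finite.union
  apply Set.Finite.union
  · exact Set.finite_singleton _
  · exact Set.Finite.subset (Set.finite_singleton (i - 1)) (by intro j hj; simp at hj ⊢; omega)
  · exact (partner_subsingleton i).finite

lemma oball_eq (d i : ℕ) :
    oball h lab (d + 1) i = {i} ∪ ⋃ k ∈ {j | OAdj h lab i j}, oball h lab d k := by
  ext j
  simp only [oball, Set.mem_setOf_eq, Set.mem_union, Set.mem_singleton_iff, Set.mem_iUnion]
  constructor
  · rintro (rfl | ⟨k, hk, hkj⟩)
    · exact Or.inl rfl
    · exact Or.inr ⟨k, hk, hkj⟩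
  · rintro (rfl | ⟨k, hk, hkj⟩)
    · exact Or.inl rfl
    · exact Or.inr ⟨k, hk, hkj⟩

lemma oball_finite : ∀ (d i : ℕ), (oball h lab d i).Finite := by
  intro d
  induction d with
  | zero => intro i; exact Set.Finite.subset (Set.finite_singleton i) (by intro j hj; exact (hj : i = j).symm)
  | succ d ih =>
    intro i
    rw [oball_eq]
    exact (Set.finite_singleton i).union ((nbhd_finite i).biUnion (fun k _ => ih k))
end Dist

lemma ncard_le_one_of_ssub {B : Type*} {s : Set B} (hs : s.Subsingleton) : s.ncard ≤ 1 := by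
  rcases Set.eq_empty_or_nonempty s with rfl | ⟨a, ha⟩
  · simp
  · calc s.ncard ≤ ({a} : Set B).ncard :=
        Set.ncard_le_ncard (fun b hb => hs hb ha) (Set.finite_singleton a)
      _ = 1 := Set.ncard_singleton a

lemma ncard_biUnion_le {t : Set ℕ} {f : ℕ → Set ℕ} (ht : t.Finite)
    (hf : ∀ k ∈ t, (f k).Finite) {b : ℕ} (hfb : ∀ k ∈ t, (f k).ncard ≤ b) :
    (⋃ k ∈ t, f k).ncard ≤ t.ncard * b := by
  classical
  have hUfin : (⋃ k ∈ t, f k).Finite := ht.biUnion hf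
  set T : Finset ℕ := ht.toFinset with hT
  have hmemT : ∀ k, k ∈ T ↔ k ∈ t := fun k => ht.mem_toFinset
  set G : ℕ → Finset ℕ := fun k => if hk : k ∈ t then (hf k hk).toFinset else ∅ with hG
  have hU : (⋃ k ∈ t, f k) = ↑(T.biUnion G) := by
    ext x
    simp only [Set.mem_iUnion, Finset.coe_biUnion, Set.mem_iUnion, Finset.mem_coe]
    constructor
    · rintro ⟨k, hk, hx⟩
      exact ⟨k, (hmemT k).mpr hk, by simp [hG, dif_pos hk, (hf k hk).mem_toFinset, hx]⟩
    · rintro ⟨k, hk, hx⟩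
      have hk' := (hmemT k).mp hk
      refine ⟨k, hk', ?_⟩
      simp only [hG, dif_pos hk'] at hx
      exact (hf k hk').mem_toFinset.mp hx
  rw [hU, Set.ncard_coe_finset]
  calc (T.biUnion G).card ≤ ∑ k ∈ T, (G k).card := Finset.card_biUnion_le
    _ ≤ ∑ _k ∈ T, b := by
        apply Finset.sum_le_sum
        intro k hk
        have hk' := (hmemT k).mp hk
        simp only [hG, dif_pos hk']
        rw [← Set.ncard_eq_toFinset_card _ (hf k hk')]
        exact hfb k hk'
    _ = T.card * b := by rw [Finset.sum_const, smul_eq_mul]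
    _ = t.ncard * b := by rw [hT, ← Set.ncard_eq_toFinset_card _ ht]

section Deg
variable {K : ℕ} {A : Type} {h : CRAlphabet K A} {lab : ℕ → Option A}

lemma nbhd_ncard (i : ℕ) : {j | OAdj h lab i j}.ncard ≤ 3 := by
  have h1 : ({i + 1} : Set ℕ).ncard = 1 := Set.ncard_singleton _
  have h2 : {j | j + 1 = i}.ncard ≤ 1 :=
    ncard_le_one_of_ssub (fun a ha b hb => by
      simp only [Set.mem_setOf_eq] at ha hb; omega)
  have h3 : {j | Partner h lab i j}.ncard ≤ 1 :=
    ncard_le_one_of_ssub (partner_subsingleton i)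
  calc {j | OAdj h lab i j}.ncard
      ≤ ({i + 1} ∪ {j | j + 1 = i} ∪ {j | Partner h lab i j} : Set ℕ).ncard := by
        refine Set.ncard_le_ncard (nbhd_sub i) ?_
        apply Set.Finite.union
        apply Set.Finite.union
        · exact Set.finite_singleton _
        · exact Set.Finite.subset (Set.finite_singleton (i - 1)) (by intro j hj; simp at hj ⊢; omega)
        · exact (partner_subsingleton i).finite
    _ ≤ ({i + 1} ∪ {j | j + 1 = i} : Set ℕ).ncard + {j | Partner h lab i j}.ncard :=
        Set.ncard_union_le _ _
    _ ≤ (({i + 1} : Set ℕ).ncard + {j | j + 1 = i}.ncard) + {j | Partner h lab i j}.ncard := by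
        have := Set.ncard_union_le ({i + 1} : Set ℕ) {j | j + 1 = i}
        omega
    _ ≤ 3 := by omega

lemma oball_one_ncard (i : ℕ) : (oball h lab 1 i).ncard ≤ 4 := by
  have hsub : oball h lab 1 i ⊆ {i} ∪ {j | OAdj h lab i j} := by
    intro j hj
    rcases hj with rfl | ⟨k, hk, hkj⟩
    · exact Or.inl rfl
    · exact Or.inr ((hkj : k = j) ▸ hk)
  calc (oball h lab 1 i).ncard
      ≤ ({i} ∪ {j | OAdj h lab i j} : Set ℕ).ncard :=
        Set.ncard_le_ncard hsub ((Set.finite_singleton i).union (nbhd_finite i))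
    _ ≤ ({i} : Set ℕ).ncard + {j | OAdj h lab i j}.ncard := Set.ncard_union_le _ _
    _ ≤ 4 := by
        have := nbhd_ncard (h := h) (lab := lab) i
        have h1 : ({i} : Set ℕ).ncard = 1 := Set.ncard_singleton _
        omega

lemma oball_big_ncard (hdc : ∀ i j, i ≤ j → lab j ≠ none → lab i ≠ none)
    {r M : ℕ} (hM : ∀ i, lab i ≠ none → (oball h lab r i).ncard ≤ M)
    {i : ℕ} (hi : lab i ≠ none) : (oball h lab (2 * r + 1) i).ncard ≤ 4 * M ^ 2 := by
  have hsub : oball h lab (2 * r + 1) i ⊆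
      ⋃ k ∈ oball h lab 1 i, ⋃ m ∈ oball h lab r k, oball h lab r m := by
    intro j hj
    have hj' : ODistLE h lab (1 + (r + r)) i j := by
      have : 2 * r + 1 = 1 + (r + r) := by omega
      rwa [this] at hj
    obtain ⟨k, hk1, hk2⟩ := odist_split 1 hj'
    obtain ⟨m, hm1, hm2⟩ := odist_split r hk2
    simp only [Set.mem_iUnion]
    exact ⟨k, hk1, m, hm1, hm2⟩
  have hlab1 : ∀ k ∈ oball h lab 1 i, lab k ≠ none := fun k hk => oball_lab hdc 1 hi hk
  have hlabr : ∀ k, lab k ≠ none → ∀ m ∈ oball h lab r k, lab m ≠ none :=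
    fun k hk m hm => oball_lab hdc r hk hm
  have hinner : ∀ k ∈ oball h lab 1 i, (⋃ m ∈ oball h lab r k, oball h lab r m).ncard ≤ M * M := by
    intro k hk
    calc (⋃ m ∈ oball h lab r k, oball h lab r m).ncard
        ≤ (oball h lab r k).ncard * M :=
          ncard_biUnion_le (oball_finite r k) (fun m _ => oball_finite r m)
            (fun m hm => hM m (hlabr k (hlab1 k hk) m hm))
      _ ≤ M * M := Nat.mul_le_mul_right M (hM k (hlab1 k hk))
  calc (oball h lab (2 * r + 1) i).ncard
      ≤ (⋃ k ∈ oball h lab 1 i, ⋃ m ∈ oball h lab r k, oball h lab r m).ncard := by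
        refine Set.ncard_le_ncard hsub ?_
        exact (oball_finite 1 i).biUnion
          (fun k _ => (oball_finite r k).biUnion (fun m _ => oball_finite r m))
    _ ≤ (oball h lab 1 i).ncard * (M * M) :=
        ncard_biUnion_le (oball_finite 1 i)
          (fun k _ => (oball_finite r k).biUnion (fun m _ => oball_finite r m)) hinner
    _ ≤ 4 * (M * M) := Nat.mul_le_mul_right _ (oball_one_ncard i)
    _ = 4 * M ^ 2 := by ring
end Deg

open Classical in
noncomputable def greedy (C : ℕ → ℕ → Prop) (N : ℕ) : ℕ → Fin (N + 1)
  | i =>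
    let used : Finset (Fin (N + 1)) :=
      ((Finset.range i).filter fun j => C i j).attach.image fun j => greedy C N j.1
    if hne : (Finset.univ \ used).Nonempty then hne.choose else 0
  termination_by i => i
  decreasing_by exact Finset.mem_range.mp (Finset.mem_filter.mp j.2).1

open Classical in
lemma greedy_eq (C : ℕ → ℕ → Prop) (N : ℕ) (i : ℕ) :
    greedy C N i =
      if hne : (Finset.univ \ (((Finset.range i).filter fun j => C i j).attach.image
          fun j => greedy C N j.1)).Nonempty then hne.choose else 0 := by
  rw [greedy]

open Classical in
lemma greedy_spec (C : ℕ → ℕ → Prop) (N : ℕ) (i : ℕ)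
    (hcard : ((Finset.range i).filter fun j => C i j).card ≤ N) :
    ∀ j, j < i → C i j → greedy C N j ≠ greedy C N i := by
  intro j hj hC
  set used : Finset (Fin (N + 1)) :=
    ((Finset.range i).filter fun j => C i j).attach.image fun j => greedy C N j.1 with hused
  have husedcard : used.card ≤ N := by
    calc used.card ≤ ((Finset.range i).filter fun j => C i j).attach.card :=
          Finset.card_image_le
      _ = ((Finset.range i).filter fun j => C i j).card := Finset.card_attach
      _ ≤ N := hcard
  have hne : (Finset.univ \ used).Nonempty := by
    rw [← Finset.card_pos, Finset.card_sdiff_of_subset (Finset.subset_univ _), Finset.card_univ,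
      Fintype.card_fin]
    omega
  have hi : greedy C N i = hne.choose := by
    rw [greedy_eq C N i, dif_pos]
  have hmem := hne.choose_spec
  rw [Finset.mem_sdiff] at hmem
  intro heq
  apply hmem.2
  rw [← hi, ← heq]
  exact Finset.mem_image.mpr ⟨⟨j, Finset.mem_filter.mpr ⟨Finset.mem_range.mpr hj, hC⟩⟩,
    Finset.mem_attach _ _, rfl⟩

/-- in a (possibly infinite) nested word whose `r`-balls have at
most `M` elements, the `r`-overlap graph has degree at most `4·M²`;
consequently there is a proper coloring of the positions with `4·M²+1` colors
giving distinct colors to distinct `r`-overlapping positions. -/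
theorem stmt4 {A : Type} (h : CRAlphabet 2 A) (lab : ℕ → Option A)
    (hdc : ∀ i j, i ≤ j → lab j ≠ none → lab i ≠ none)
    (r M : ℕ) (hM : ∀ i, lab i ≠ none → (oball h lab r i).ncard ≤ M) :
    (∀ i, lab i ≠ none →
      {j | j ≠ i ∧ lab j ≠ none ∧ Overlap h lab r i j}.ncard ≤ 4 * M ^ 2) ∧
    ∃ χ : ℕ → Fin (4 * M ^ 2 + 1),
      ∀ i j, lab i ≠ none → lab j ≠ none → i ≠ j → Overlap h lab r i j →
        χ i ≠ χ j := by
  constructor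
  · intro i hi
    refine le_trans (Set.ncard_le_ncard ?_ (oball_finite (2*r+1) i)) (oball_big_ncard hdc hM hi)
    rintro j ⟨-, -, -, hdist⟩
    exact hdist
  · set C : ℕ → ℕ → Prop := fun i j =>
      lab i ≠ none ∧ lab j ≠ none ∧ (Overlap h lab r i j ∨ Overlap h lab r j i) with hC
    have hcard : ∀ i, ∀ (inst : DecidablePred (C i)),
        ((Finset.range i).filter fun j => C i j).card ≤ 4 * M ^ 2 := by
      intro i inst
      by_cases hi : lab i = none
      · have : ((Finset.range i).filter fun j => C i j) = ∅ := by
          apply Finset.filter_eq_empty_iff.mpr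
          intro j _ hCij
          exact hCij.1 hi
        rw [this]
        simp
      · have hsub : ↑((Finset.range i).filter fun j => C i j) ⊆ oball h lab (2*r+1) i := by
          intro j hj
          simp only [Finset.coe_filter, Set.mem_setOf_eq, Finset.mem_range] at hj
          rcases hj.2.2.2 with hov | hov
          · exact hov.2
          · exact odist_symm _ hov.2
        calc ((Finset.range i).filter fun j => C i j).card
            = (↑((Finset.range i).filter fun j => C i j) : Set ℕ).ncard := by
              rw [Set.ncard_coe_finset]
          _ ≤ (oball h lab (2*r+1) i).ncard :=
              Set.ncard_le_ncard hsub (oball_finite _ _)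
          _ ≤ 4 * M ^ 2 := oball_big_ncard hdc hM hi
    refine ⟨greedy C (4 * M ^ 2), ?_⟩
    intro i j hi hj hij hov
    rcases lt_or_gt_of_ne hij with hlt | hlt
    · exact (greedy_spec C (4 * M ^ 2) j (hcard j _) i hlt ⟨hj, hi, Or.inr hov⟩)
    · exact (greedy_spec C (4 * M ^ 2) i (hcard i _) j hlt ⟨hi, hj, Or.inl hov⟩).symm
end

section
/- MVPA and MNWA are expressively equivalent: for a set L of nested words over a K-stack call-return alphabet, there exists a multi-stack visibly pushdown automaton recognizing L if and only if there exists a multi-stack nested-word automaton recognizing L. -/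
/-- A generalized multi-stack nested-word automaton (generalized MNWA) over a
`K`-stack call-return alphabet: `delta1` contains local/push/unmatched-return
transitions, `delta2` the transitions at matched returns (consulting also the
state reached at the matching call); `qC` is the set of calling states.  An
MNWA is a generalized MNWA with `qC = ∅`. -/
structure GMNWA (K : ℕ) (A : Type) (Q : Type) where
  delta1 : Q → A → Q → Prop
  delta2 : Q → Q → A → Q → Prop
  qI : Set Q
  qF : Set Q
  qC : Set Q

/-- `ρ` is a run of the generalized MNWA `B` on the (nonempty) nested word of
`w` (positions `0`-based). -/
def gRun {K : ℕ} {A Q : Type} (h : CRAlphabet K A) (B : GMNWA K A Q)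
    (w : List A) (ρ : ℕ → Q) : Prop :=
  (∃ q ∈ B.qI, ∃ a, w[0]? = some a ∧ B.delta1 q a (ρ 0)) ∧
  ∀ i, 0 < i → i < w.length → ∃ a, w[i]? = some a ∧
    ((∃ j, MuAny h w j i ∧ B.delta2 (ρ j) (ρ (i - 1)) a (ρ i)) ∨
     ((¬ ∃ j, MuAny h w j i) ∧ B.delta1 (ρ (i - 1)) a (ρ i)))

/-- The run `ρ` of `B` on `w` is accepting: it ends in a final state, and
every position carrying a calling state is a call with a matching return. -/
def gAcc {K : ℕ} {A Q : Type} (h : CRAlphabet K A) (B : GMNWA K A Q)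
    (w : List A) (ρ : ℕ → Q) : Prop :=
  ρ (w.length - 1) ∈ B.qF ∧ ∀ i < w.length, ρ i ∈ B.qC → ∃ j, MuAny h w i j

/-- The language of the generalized MNWA `B` (as a set of nonempty strings,
identified with their nested words via the canonical bijection). -/
def gLang {K : ℕ} {A Q : Type} (h : CRAlphabet K A) (B : GMNWA K A Q) :
    Set (List A) :=
  {w | w ≠ [] ∧ ∃ ρ, gRun h B w ρ ∧ gAcc h B w ρ}

/-- A multi-stack visibly pushdown automaton over a `K`-stack call-return
alphabet, with states `Q` and stack alphabet `Γ` (the bottom symbol `⊥` is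
represented implicitly: a stack contents is a list over `Γ`, the empty list
standing for the stack containing only `⊥`; in pop transitions the stack
symbol `none` stands for `⊥`). -/
structure MVPA (K : ℕ) (A Q Γ : Type) where
  pushT : Q → A → Γ → Q → Prop
  popT : Q → A → Option Γ → Q → Prop
  intT : Q → A → Q → Prop
  qI : Set Q
  qF : Set Q

/-- One step of the MVPA `M` reading letter `a`, from configuration `c` to
configuration `c'` (a configuration is a state together with one stack
contents per stack). -/
def vStep {K : ℕ} {A Q Γ : Type} (h : CRAlphabet K A) (M : MVPA K A Q Γ)
    (a : A) (c c' : Q × (Fin K → List Γ)) : Prop :=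
  (∃ s, h.kind a = .call s ∧ ∃ g, M.pushT c.1 a g c'.1 ∧
     c'.2 s = g :: c.2 s ∧ ∀ t, t ≠ s → c'.2 t = c.2 t) ∨
  (∃ s, h.kind a = .ret s ∧ (∀ t, t ≠ s → c'.2 t = c.2 t) ∧
     ((∃ g, M.popT c.1 a (some g) c'.1 ∧ c.2 s = g :: c'.2 s) ∨
      (M.popT c.1 a none c'.1 ∧ c.2 s = [] ∧ c'.2 s = []))) ∨
  (h.kind a = .int ∧ M.intT c.1 a c'.1 ∧ c'.2 = c.2)

/-- The MVPA `M` accepts the string `w`: some run starting in an initial state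
with all stacks empty and ending in a final state. -/
def vAccepts {K : ℕ} {A Q Γ : Type} (h : CRAlphabet K A) (M : MVPA K A Q Γ)
    (w : List A) : Prop :=
  ∃ f : ℕ → Q × (Fin K → List Γ),
    (f 0).1 ∈ M.qI ∧ (∀ s, (f 0).2 s = []) ∧
    (∀ i a, w[i]? = some a → vStep h M a (f i) (f (i + 1))) ∧
    (f w.length).1 ∈ M.qF

/-- The language of the MVPA `M` (nonempty strings, identified with their
nested words). -/
def vLang {K : ℕ} {A Q Γ : Type} (h : CRAlphabet K A) (M : MVPA K A Q Γ) :
    Set (List A) :=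
  {w | w ≠ [] ∧ vAccepts h M w}


/-! ### Auxiliary development -/

attribute [local instance] Classical.propDecidable

namespace Stmt8Aux

variable {K : ℕ} {A : Type}

/-- segment of `w` from position `l` (inclusive) to `m` (exclusive) -/
def seg (w : List A) (l m : ℕ) : List A := (w.take m).drop l

noncomputable def cnt (S : Set A) (u : List A) : ℕ :=
  u.countP (fun x => decide (x ∈ S))

lemma cnt_append (S : Set A) (u v : List A) : cnt S (u ++ v) = cnt S u + cnt S v :=
  List.countP_append ..

lemma cnt_nil (S : Set A) : cnt S [] = 0 := rfl

lemma cnt_single_mem {S : Set A} {x : A} (hx : x ∈ S) : cnt S [x] = 1 := by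
  simp [cnt, hx]

lemma cnt_single_not_mem {S : Set A} {x : A} (hx : x ∉ S) : cnt S [x] = 0 := by
  simp [cnt, hx]

lemma prefix_single {p : List A} {x : A} (h : p <+: [x]) : p = [] ∨ p = [x] := by
  rcases p with _ | ⟨y, p⟩
  · exact Or.inl rfl
  · obtain ⟨t, ht⟩ := h
    simp only [List.cons_append, List.cons.injEq] at ht
    obtain ⟨rfl, ht⟩ := ht
    have : p = [] := by cases p <;> simp_all
    exact Or.inr (by rw [this])

lemma prefix_split {p u v : List A} (h : p <+: u ++ v) :
    p <+: u ∨ ∃ q, q <+: v ∧ p = u ++ q := by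
  obtain ⟨t, ht⟩ := h
  rcases List.append_eq_append_iff.mp ht with ⟨a', ha1, _⟩ | ⟨c', hc1, hc2⟩
  · exact Or.inl ⟨a', ha1.symm⟩
  · exact Or.inr ⟨c', ⟨t, hc2.symm⟩, hc1⟩

lemma seg_self (w : List A) (l : ℕ) : seg w l l = [] := by
  apply List.drop_eq_nil_of_le
  simpa using List.length_take_le l w

lemma seg_append (w : List A) {l t m : ℕ} (h1 : l ≤ t) (h2 : t ≤ m) :
    seg w l m = seg w l t ++ seg w t m := by
  unfold seg
  have h3 : w.take t = (w.take m).take t := by rw [List.take_take, min_eq_left h2]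
  by_cases hl : l ≤ (w.take t).length
  · conv_lhs => rw [← List.take_append_drop t (w.take m), ← h3]
    rw [List.drop_append_of_le_length hl, List.drop_take]
  · push_neg at hl
    have hwl : w.length < l := by
      have := (List.length_take : (w.take t).length = _)
      omega
    have e1 : (w.take m).drop l = [] :=
      List.drop_eq_nil_of_le (by have := (List.length_take : (w.take m).length = _); omega)
    have e2 : (w.take t).drop l = [] :=
      List.drop_eq_nil_of_le (by omega)
    have e3 : (w.take m).drop t = [] :=
      List.drop_eq_nil_of_le (by have := (List.length_take : (w.take m).length = _); omega)
    simp [e1, e2, e3]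

lemma seg_succ (w : List A) {l t : ℕ} (h1 : l ≤ t) (h2 : t < w.length) :
    seg w l (t + 1) = seg w l t ++ [w[t]] := by
  rw [seg_append w h1 (Nat.le_succ t)]
  congr 1
  unfold seg
  rw [List.take_succ, List.getElem?_eq_getElem h2]
  rw [List.drop_append_of_le_length (by simp [List.length_take]; omega)]
  simp [List.drop_eq_nil_of_le, List.length_take, min_le_left]

/-- Dyck counting: well-formed segments are balanced and prefix-dominated. -/
lemma swf_count {c r : Set A} (hd : ∀ x, x ∈ c → x ∉ r) {u : List A}
    (hu : SWellFormed c r u) :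
    cnt c u = cnt r u ∧ ∀ p : List A, p <+: u → cnt r p ≤ cnt c p := by
  induction hu with
  | nil =>
    exact ⟨rfl, fun p hp => by rw [List.prefix_nil.mp hp]; exact le_refl _⟩
  | @single x hc hr =>
    refine ⟨by rw [cnt_single_not_mem hc, cnt_single_not_mem hr], fun p hp => ?_⟩
    rcases prefix_single hp with rfl | rfl
    · rfl
    · rw [cnt_single_not_mem hc, cnt_single_not_mem hr]
  | @wrap a b u ha hb hu ih =>
    obtain ⟨ihbal, ihpre⟩ := ih
    have hbc : b ∉ c := fun hbc => hd b hbc hb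
    have hane : a ∉ r := hd a ha
    constructor
    · rw [show a :: u ++ [b] = [a] ++ u ++ [b] from rfl, cnt_append, cnt_append,
        cnt_append, cnt_append, cnt_single_mem ha, cnt_single_not_mem hane,
        cnt_single_mem hb, cnt_single_not_mem hbc, ihbal]
      omega
    · intro p hp
      rcases p with _ | ⟨y, p⟩
      · simp [cnt_nil]
      · have hya : y = a ∧ p <+: u ++ [b] := by
          rw [show a :: u ++ [b] = a :: (u ++ [b]) from rfl] at hp
          exact (List.cons_prefix_cons.mp hp).imp_left id
        obtain ⟨rfl, hp'⟩ := hya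
        have key : cnt r p ≤ cnt c p + 1 := by
          rcases prefix_split hp' with h | ⟨q, hq, rfl⟩
          · exact (ihpre p h).trans (by omega)
          · rcases prefix_single hq with rfl | rfl
            · simp only [List.append_nil]; have := ihpre u List.prefix_rfl; omega
            · rw [cnt_append, cnt_append, cnt_single_mem hb, cnt_single_not_mem hbc]
              omega
        rw [show (_ :: p : List A) = [_] ++ p from rfl, cnt_append, cnt_append,
          cnt_single_mem ha, cnt_single_not_mem hane]
        omega
  | @concat u v hu hv ihu ihv =>
    obtain ⟨hub, hup⟩ := ihu
    obtain ⟨hvb, hvp⟩ := ihv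
    refine ⟨by rw [cnt_append, cnt_append, hub, hvb], fun p hp => ?_⟩
    rcases prefix_split hp with hh | ⟨q, hq, rfl⟩
    · exact hup p hh
    · have := hvp q hq
      rw [cnt_append, cnt_append]
      omega

section Run

variable {Q Γ : Type} (h : CRAlphabet K A) (M : MVPA K A Q Γ) (w : List A)
  (f : ℕ → Q × (Fin K → List Γ))

lemma callSet_retSet_disjoint (s : Fin K) :
    ∀ x, x ∈ h.callSet s → x ∉ h.retSet s := by
  intro x hc hr
  have hc' : h.kind x = .call s := hc
  have hr' : h.kind x = .ret s := hr
  rw [hc'] at hr'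
  exact nomatch hr'

/-- a step that is not a call or return of stack `s` leaves stack `s` alone -/
lemma step_stack_other {a : A} {s : Fin K} {c c' : Q × (Fin K → List Γ)}
    (hst : vStep h M a c c')
    (hns : ¬ h.kind a = .call s) (hnr : ¬ h.kind a = .ret s) :
    c'.2 s = c.2 s := by
  rcases hst with ⟨s', hk, g, _, hps, hother⟩ | ⟨s', hk, hother, _⟩ | ⟨hk, _, hall⟩
  · exact hother s (fun hss => hns (hss ▸ hk))
  · exact hother s (fun hss => hnr (hss ▸ hk))
  · rw [hall]

/-- Region lemma: over a stretch where returns of `s` never outnumber calls of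
`s` on any prefix, the stack `s` evolves purely above its initial content. -/
lemma region (s : Fin K) {l m : ℕ} (hlm : l ≤ m) (hm : m ≤ w.length)
    (hstep : ∀ t, l ≤ t → t < m → ∀ a, w[t]? = some a → vStep h M a (f t) (f (t+1)))
    (hpre : ∀ t, l ≤ t → t ≤ m →
      cnt (h.retSet s) (seg w l t) ≤ cnt (h.callSet s) (seg w l t)) :
    ∃ σ : List Γ, (f m).2 s = σ ++ (f l).2 s ∧
      σ.length + cnt (h.retSet s) (seg w l m) = cnt (h.callSet s) (seg w l m) := by
  induction m, hlm using Nat.le_induction with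
  | base =>
    exact ⟨[], by simp, by simp [seg_self, cnt_nil]⟩
  | succ m hlm ih =>
    obtain ⟨σ, hσ, hcount⟩ := ih (by omega)
      (fun t h1 h2 a ha => hstep t h1 (by omega) a ha)
      (fun t h1 h2 => hpre t h1 (by omega))
    have hmlen : m < w.length := by omega
    have ha : w[m]? = some w[m] := List.getElem?_eq_getElem hmlen
    have hst := hstep m hlm (by omega) _ ha
    have hseg : seg w l (m+1) = seg w l m ++ [w[m]] := seg_succ w hlm hmlen
    rcases hst with ⟨s', hk, g, hpush, hps, hother⟩ | ⟨s', hk, hother, hpop⟩ |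
        ⟨hk, _, hall⟩
    · by_cases hss : s' = s
      · rw [hss] at hk hps hother
        refine ⟨g :: σ, by rw [hps, hσ]; rfl, ?_⟩
        have h1 : cnt (h.callSet s) (seg w l (m+1))
            = cnt (h.callSet s) (seg w l m) + 1 := by
          rw [hseg, cnt_append, cnt_single_mem (show (w[m] : A) ∈ h.callSet s from hk)]
        have h2 : cnt (h.retSet s) (seg w l (m+1))
            = cnt (h.retSet s) (seg w l m) := by
          rw [hseg, cnt_append, cnt_single_not_mem (fun hmem => ?_)]
          · omega
          · exact callSet_retSet_disjoint h s _ hk hmem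
        simp only [List.length_cons]
        omega
      · have hnc : (w[m] : A) ∉ h.callSet s := fun hmem => by
          have : CRKind.call s' = CRKind.call s := hk ▸ (hmem : h.kind w[m] = .call s)
          injection this with hh
          exact hss hh
        have hnr : (w[m] : A) ∉ h.retSet s := fun hmem => by
          have : CRKind.call s' = CRKind.ret s := hk ▸ (hmem : h.kind w[m] = .ret s)
          exact nomatch this
        refine ⟨σ, by rw [hother s (fun e => hss e.symm), hσ], ?_⟩
        rw [hseg, cnt_append, cnt_append, cnt_single_not_mem hnc,
          cnt_single_not_mem hnr]
        omega
    · by_cases hss : s' = s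
      · rw [hss] at hk hother hpop
        have h1 : cnt (h.callSet s) (seg w l (m+1))
            = cnt (h.callSet s) (seg w l m) := by
          rw [hseg, cnt_append, cnt_single_not_mem (fun hmem => ?_)]
          · omega
          · exact callSet_retSet_disjoint h s _ hmem hk
        have h2 : cnt (h.retSet s) (seg w l (m+1))
            = cnt (h.retSet s) (seg w l m) + 1 := by
          rw [hseg, cnt_append, cnt_single_mem (show (w[m] : A) ∈ h.retSet s from hk)]
        have hσpos : 1 ≤ σ.length := by
          have := hpre (m+1) (by omega) (le_refl _)
          omega
        obtain ⟨g', σ', rfl⟩ : ∃ g' σ', σ = g' :: σ' := by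
          rcases σ with _ | ⟨g', σ'⟩
          · simp at hσpos
          · exact ⟨g', σ', rfl⟩
        rcases hpop with ⟨g0, hpt, hcons⟩ | ⟨hpt, hnil, hnil'⟩
        · rw [hσ] at hcons
          simp only [List.cons_append, List.cons.injEq] at hcons
          refine ⟨σ', hcons.2.symm, ?_⟩
          simp only [List.length_cons] at hcount
          omega
        · rw [hσ] at hnil
          exact absurd hnil (by simp)
      · have hnc : (w[m] : A) ∉ h.callSet s := fun hmem => by
          have : CRKind.ret s' = CRKind.call s := hk ▸ (hmem : h.kind w[m] = .call s)
          exact nomatch this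
        have hnr : (w[m] : A) ∉ h.retSet s := fun hmem => by
          have : CRKind.ret s' = CRKind.ret s := hk ▸ (hmem : h.kind w[m] = .ret s)
          injection this with hh
          exact hss hh
        refine ⟨σ, by rw [hother s (fun e => hss e.symm), hσ], ?_⟩
        rw [hseg, cnt_append, cnt_append, cnt_single_not_mem hnc,
          cnt_single_not_mem hnr]
        omega
    · have hnc : (w[m] : A) ∉ h.callSet s := fun hmem => by
        have : CRKind.int = CRKind.call s := hk ▸ (hmem : h.kind w[m] = .call s)
        exact nomatch this
      have hnr : (w[m] : A) ∉ h.retSet s := fun hmem => by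
        have : CRKind.int = CRKind.ret s := hk ▸ (hmem : h.kind w[m] = .ret s)
        exact nomatch this
      refine ⟨σ, by rw [hall, hσ], ?_⟩
      rw [hseg, cnt_append, cnt_append, cnt_single_not_mem hnc,
        cnt_single_not_mem hnr]
      omega

/-- Lemma A: at a matched return, the stack of `s` is the stack at the
matching call with the pushed symbol on top. -/
lemma matched_stack {s : Fin K} {j i : ℕ} (hmt : Matched h w s j i)
    (hstep : ∀ t, t < i → ∀ a, w[t]? = some a → vStep h M a (f t) (f (t+1))) :
    ∃ g a, w[j]? = some a ∧ M.pushT (f j).1 a g (f (j+1)).1 ∧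
      (f (j+1)).2 s = g :: (f j).2 s ∧ (f i).2 s = g :: (f j).2 s := by
  obtain ⟨hji, hilen, ⟨a, hwj, hac⟩, ⟨b, hwi, hbr⟩, hswf⟩ := hmt
  have hstj := hstep j hji a hwj
  have hkind : h.kind a = .call s := hac
  rcases hstj with ⟨s', hk, g, hpush, hps, hother⟩ | ⟨s', hk, _, _⟩ | ⟨hk, _, _⟩
  · have hss : s' = s := by
      rw [hkind] at hk
      injection hk with hh
      exact hh.symm
    rw [hss] at hps hother
    refine ⟨g, a, hwj, hpush, hps, ?_⟩
    have hd := callSet_retSet_disjoint h s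
    obtain ⟨hbal, hpre⟩ := swf_count hd hswf
    have hsegeq : (w.take i).drop (j+1) = seg w (j+1) i := rfl
    rw [hsegeq] at hbal hpre
    obtain ⟨σ, hσ, hcount⟩ := region h M w f s (show j+1 ≤ i by omega)
      (le_of_lt hilen)
      (fun t h1 h2 a' ha' => hstep t h2 a' ha')
      (fun t h1 h2 => by
        have := hpre (seg w (j+1) t) ⟨seg w t i, (seg_append w h1 h2).symm⟩
        exact this)
    have hσnil : σ = [] := List.eq_nil_of_length_eq_zero (by omega)
    rw [hσnil] at hσ
    rw [hσ, hps]
    rfl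
  · rw [hkind] at hk; exact nomatch hk
  · rw [hkind] at hk; exact nomatch hk

/-- pending-call invariant -/
def Pend (s : Fin K) : ℕ → List Γ → Prop
  | _, [] => True
  | i, _ :: σ => ∃ j, j < i ∧ (∃ a, w[j]? = some a ∧ a ∈ h.callSet s) ∧
      SWellFormed (h.callSet s) (h.retSet s) (seg w (j+1) i) ∧ Pend s j σ

lemma pend_neutral {s : Fin K} {i : ℕ} {x : A} (hx : w[i]? = some x)
    (hxc : x ∉ h.callSet s) (hxr : x ∉ h.retSet s) {L : List Γ}
    (hp : Pend h w s i L) : Pend h w s (i+1) L := by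
  rcases L with _ | ⟨g, σ⟩
  · trivial
  · obtain ⟨j, hji, hcall, hswf, hrest⟩ := hp
    have hilen : i < w.length := by
      by_contra hc
      rw [List.getElem?_eq_none (by omega)] at hx
      exact nomatch hx
    refine ⟨j, by omega, hcall, ?_, hrest⟩
    have : seg w (j+1) (i+1) = seg w (j+1) i ++ [w[i]] := seg_succ w (by omega) hilen
    rw [this]
    have hxw : (w[i] : A) = x := by
      have := List.getElem?_eq_getElem hilen
      rw [this] at hx
      exact (Option.some.inj hx)
    exact SWellFormed.concat hswf (SWellFormed.single (hxw ▸ hxc) (hxw ▸ hxr))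

lemma pend_invariant (s : Fin K) (hst0 : (f 0).2 s = []) :
    ∀ i, i ≤ w.length →
      (∀ t, t < i → ∀ a, w[t]? = some a → vStep h M a (f t) (f (t+1))) →
      Pend h w s i ((f i).2 s) := by
  intro i
  induction i with
  | zero => intro _ _; rw [hst0]; trivial
  | succ i ih =>
    intro hlen hstep
    have hilen : i < w.length := by omega
    have hwa : w[i]? = some w[i] := List.getElem?_eq_getElem hilen
    have hprev := ih (by omega) (fun t ht => hstep t (by omega))
    have hst := hstep i (by omega) _ hwa
    rcases hst with ⟨s', hk, g, hpush, hps, hother⟩ | ⟨s', hk, hother, hpop⟩ |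
        ⟨hk, _, hall⟩
    · by_cases hss : s' = s
      · rw [hss] at hk hps hother
        rw [hps]
        exact ⟨i, by omega, ⟨w[i], hwa, hk⟩, by rw [seg_self]; exact .nil, hprev⟩
      · rw [hother s (fun e => hss e.symm)]
        refine pend_neutral h w hwa ?_ ?_ hprev
        · intro hmem
          have : CRKind.call s' = CRKind.call s := hk ▸ (hmem : h.kind w[i] = _)
          injection this with hh; exact hss hh
        · intro hmem
          have : CRKind.call s' = CRKind.ret s := hk ▸ (hmem : h.kind w[i] = _)
          exact nomatch this
    · by_cases hss : s' = s
      · rw [hss] at hk hother hpop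
        rcases hpop with ⟨g0, hpt, hcons⟩ | ⟨hpt, hnil, hnil'⟩
        · rw [hcons] at hprev
          obtain ⟨j, hji, hcall, hswf, hrest⟩ := hprev
          rcases hL : (f (i+1)).2 s with _ | ⟨g', σ'⟩
          · trivial
          · rw [hL] at hrest
            obtain ⟨j', hj'i, hcall', hswf', hrest'⟩ := hrest
            refine ⟨j', by omega, hcall', ?_, hrest'⟩
            obtain ⟨aj, hwj, hacj⟩ := hcall
            have hjlen : j < w.length := by omega
            have hajw : aj = w[j] := by
              rw [List.getElem?_eq_getElem hjlen] at hwj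
              exact (Option.some.inj hwj).symm
            have e1 : seg w (j'+1) (i+1) = seg w (j'+1) j ++ seg w j (i+1) :=
              seg_append w (by omega) (by omega)
            have e2 : seg w j (i+1) = seg w j i ++ [w[i]] :=
              seg_succ w (by omega) hilen
            have e3 : seg w j i = w[j] :: seg w (j+1) i := by
              rw [seg_append w (Nat.le_succ j) (by omega : j + 1 ≤ i),
                seg_succ w (le_refl j) hjlen, seg_self]
              rfl
            rw [e1, e2, e3]
            refine SWellFormed.concat hswf' ?_
            have : (w[j] :: seg w (j+1) i) ++ [w[i]]
                = w[j] :: (seg w (j+1) i ++ [w[i]]) := rfl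
            rw [this]
            exact SWellFormed.wrap (hajw ▸ hacj) hk hswf
        · rw [hnil']; trivial
      · rw [hother s (fun e => hss e.symm)]
        refine pend_neutral h w hwa ?_ ?_ hprev
        · intro hmem
          have : CRKind.ret s' = CRKind.call s := hk ▸ (hmem : h.kind w[i] = _)
          exact nomatch this
        · intro hmem
          have : CRKind.ret s' = CRKind.ret s := hk ▸ (hmem : h.kind w[i] = _)
          injection this with hh; exact hss hh
    · rw [hall]
      refine pend_neutral h w hwa ?_ ?_ hprev
      · intro hmem
        have : CRKind.int = CRKind.call s := hk ▸ (hmem : h.kind w[i] = _)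
        exact nomatch this
      · intro hmem
        have : CRKind.int = CRKind.ret s := hk ▸ (hmem : h.kind w[i] = _)
        exact nomatch this

/-- Lemma B: at an unmatched return position, the stack of `s` is empty. -/
lemma unmatched_empty {s : Fin K} {i : ℕ} {a : A} (hwi : w[i]? = some a)
    (hkind : h.kind a = .ret s) (hnm : ¬ ∃ j, MuAny h w j i)
    (hst0 : (f 0).2 s = [])
    (hstep : ∀ t, t < i → ∀ a, w[t]? = some a → vStep h M a (f t) (f (t+1))) :
    (f i).2 s = [] := by
  have hilen : i < w.length := by
    by_contra hc
    rw [List.getElem?_eq_none (by omega)] at hwi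
    exact nomatch hwi
  have hpend := pend_invariant h M w f s hst0 i (by omega) hstep
  rcases hL : (f i).2 s with _ | ⟨g, σ⟩
  · rfl
  · exfalso
    rw [hL] at hpend
    obtain ⟨j, hji, hcall, hswf, _⟩ := hpend
    exact hnm ⟨j, s, hji, hilen, hcall, ⟨a, hwi, hkind⟩, hswf⟩

lemma muAny_ret {j i : ℕ} {a : A} (hmu : MuAny h w j i) (hwi : w[i]? = some a) :
    ∃ s, h.kind a = .ret s ∧ Matched h w s j i := by
  obtain ⟨s, hm⟩ := hmu
  obtain ⟨-, -, -, ⟨b, hwb, hbr⟩, -⟩ := id hm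
  have hba : b = a := by rw [hwi] at hwb; exact (Option.some.inj hwb).symm
  exact ⟨s, hba ▸ hbr, hm⟩

lemma not_muAny_of_kind {i : ℕ} {a : A} (hwi : w[i]? = some a)
    (hk : ∀ s, ¬ h.kind a = .ret s) : ¬ ∃ j, MuAny h w j i := by
  rintro ⟨j, hmu⟩
  obtain ⟨s, hks, _⟩ := muAny_ret h w hmu hwi
  exact hk s hks

end Run

end Stmt8Aux

namespace Stmt8Aux

variable {K : ℕ} {A : Type}

section Constructions

variable {Q Γ : Type}

/-- the MNWA simulating an MVPA: states remember the MVPA state together with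
the symbol pushed at the current position (if it is a call). -/
def toMNWA (h : CRAlphabet K A) (M : MVPA K A Q Γ) : GMNWA K A (Q × Option Γ) where
  delta1 p a p' :=
    match h.kind a with
    | .call _ => ∃ g, p'.2 = some g ∧ M.pushT p.1 a g p'.1
    | .ret _ => M.popT p.1 a none p'.1 ∧ p'.2 = none
    | .int => M.intT p.1 a p'.1 ∧ p'.2 = none
  delta2 pc p a p' := ∃ g, pc.2 = some g ∧ M.popT p.1 a (some g) p'.1 ∧ p'.2 = none
  qI := {p | p.1 ∈ M.qI}
  qF := {p | p.1 ∈ M.qF}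
  qC := ∅

/-- the MVPA simulating an MNWA: at a call, push the target state. -/
def toMVPA (B : GMNWA K A Q) : MVPA K A Q Q where
  pushT q a g q' := B.delta1 q a q' ∧ g = q'
  popT q a og q' :=
    match og with
    | some g => B.delta2 g q a q'
    | none => B.delta1 q a q'
  intT := B.delta1
  qI := B.qI
  qF := B.qF

/-- stack contents reconstructed from a nested-word run, given the pushed
symbol at each position. -/
def mkSt (h : CRAlphabet K A) (w : List A) (ps : ℕ → Option Γ) : ℕ → Fin K → List Γ
  | 0, _ => []
  | (i+1), s =>
    match w[i]? with
    | none => mkSt h w ps i s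
    | some a =>
      match h.kind a with
      | .call t =>
        if s = t then
          match ps i with
          | some g => g :: mkSt h w ps i s
          | none => mkSt h w ps i s
        else mkSt h w ps i s
      | .ret t => if s = t then (mkSt h w ps i s).tail else mkSt h w ps i s
      | .int => mkSt h w ps i s

variable (h : CRAlphabet K A) (w : List A) (ps : ℕ → Option Γ)

lemma mkSt_call {i : ℕ} {a : A} {t : Fin K} {g : Γ} (hwi : w[i]? = some a)
    (hk : h.kind a = .call t) (hg : ps i = some g) :
    mkSt h w ps (i+1) t = g :: mkSt h w ps i t ∧
      ∀ s, s ≠ t → mkSt h w ps (i+1) s = mkSt h w ps i s := by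
  constructor
  · simp [mkSt, hwi, hk, hg]
  · intro s hs
    simp only [mkSt, hwi, hk, hg, if_neg hs]

lemma mkSt_ret {i : ℕ} {a : A} {t : Fin K} (hwi : w[i]? = some a)
    (hk : h.kind a = .ret t) :
    mkSt h w ps (i+1) t = (mkSt h w ps i t).tail ∧
      ∀ s, s ≠ t → mkSt h w ps (i+1) s = mkSt h w ps i s := by
  constructor
  · simp [mkSt, hwi, hk]
  · intro s hs
    simp only [mkSt, hwi, hk, if_neg hs]

lemma mkSt_int {i : ℕ} {a : A} (hwi : w[i]? = some a)
    (hk : h.kind a = .int) (s : Fin K) :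
    mkSt h w ps (i+1) s = mkSt h w ps i s := by
  simp only [mkSt, hwi, hk]

/-- the state part of the run reconstructed from a nested-word run -/
def mkState (q0 : Q) (r : ℕ → Q) : ℕ → Q
  | 0 => q0
  | i+1 => r i

/-- the pushed symbol at each position, read off from an MVPA run -/
def osym (h : CRAlphabet K A) (w : List A)
    (f : ℕ → Q × (Fin K → List Γ)) : ℕ → Option Γ := fun i =>
  match w[i]? with
  | none => none
  | some a =>
    match h.kind a with
    | .call s => ((f (i+1)).2 s).head?
    | _ => none

lemma osym_call {f : ℕ → Q × (Fin K → List Γ)} {i : ℕ} {a : A} {s : Fin K}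
    (hwi : w[i]? = some a) (hk : h.kind a = .call s) :
    osym h w f i = ((f (i+1)).2 s).head? := by
  simp only [osym, hwi, hk]

lemma osym_ret {f : ℕ → Q × (Fin K → List Γ)} {i : ℕ} {a : A} {s : Fin K}
    (hwi : w[i]? = some a) (hk : h.kind a = .ret s) :
    osym h w f i = none := by
  simp only [osym, hwi, hk]

lemma osym_int {f : ℕ → Q × (Fin K → List Γ)} {i : ℕ} {a : A}
    (hwi : w[i]? = some a) (hk : h.kind a = .int) :
    osym h w f i = none := by
  simp only [osym, hwi, hk]

end Constructions

end Stmt8Aux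

namespace Stmt8Aux

variable {K : ℕ} {A : Type}

section Main

variable {Q Γ : Type}

lemma getElem?_some_len {w : List A} {i : ℕ} {a : A} (hwi : w[i]? = some a) :
    i < w.length := by
  by_contra hc
  rw [List.getElem?_eq_none (by omega)] at hwi
  exact nomatch hwi

/-- Completeness of `toMNWA`: accepted strings of `M` are in the language of
the nested-word automaton. -/
lemma vAccepts_mem_gLang (h : CRAlphabet K A) (M : MVPA K A Q Γ) (w : List A)
    (hw : w ≠ []) (ha : vAccepts h M w) : w ∈ gLang h (toMNWA h M) := by
  obtain ⟨f, hI, h0, hstep, hF⟩ := ha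
  have hlen : 0 < w.length := List.length_pos_iff.mpr hw
  refine ⟨hw, fun i => ((f (i+1)).1, osym h w f i), ⟨?_, ?_⟩, ?_, ?_⟩
  · -- initial clause
    have hw0 : w[0]? = some w[0] := List.getElem?_eq_getElem hlen
    refine ⟨((f 0).1, none), hI, w[0], hw0, ?_⟩
    rcases hstep 0 w[0] hw0 with ⟨s, hk, g, hpush, hps, -⟩ | ⟨s, hk, -, hpop⟩ |
        ⟨hk, hint, -⟩
    · show (toMNWA h M).delta1 _ _ _
      simp only [toMNWA, hk]
      exact ⟨g, by rw [osym_call h w hw0 hk, hps]; rfl, hpush⟩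
    · show (toMNWA h M).delta1 _ _ _
      simp only [toMNWA, hk]
      rcases hpop with ⟨g, -, hcons⟩ | ⟨hpt, -, -⟩
      · rw [h0 s] at hcons
        exact absurd hcons (by simp)
      · exact ⟨hpt, osym_ret h w hw0 hk⟩
    · show (toMNWA h M).delta1 _ _ _
      simp only [toMNWA, hk]
      exact ⟨hint, osym_int h w hw0 hk⟩
  · -- step clause
    intro i hi0 hilen
    have hwi : w[i]? = some w[i] := List.getElem?_eq_getElem hilen
    refine ⟨w[i], hwi, ?_⟩
    obtain ⟨i, rfl⟩ : ∃ i', i = i' + 1 := ⟨i - 1, by omega⟩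
    have hstepall : ∀ t, t < i + 1 → ∀ a, w[t]? = some a →
        vStep h M a (f t) (f (t+1)) := fun t _ a hta => hstep t a hta
    rcases hstep (i+1) w[i+1] hwi with ⟨s, hk, g, hpush, hps, -⟩ |
        ⟨s, hk, -, hpop⟩ | ⟨hk, hint, -⟩
    · refine Or.inr ⟨not_muAny_of_kind h w hwi
        (fun s' hks => by rw [hk] at hks; exact nomatch hks), ?_⟩
      show (toMNWA h M).delta1 _ _ _
      simp only [toMNWA, hk]
      exact ⟨g, by rw [osym_call h w hwi hk, hps]; rfl, hpush⟩
    · by_cases hm : ∃ j, MuAny h w j (i+1)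
      · obtain ⟨j, hmu⟩ := hm
        obtain ⟨s0, hks, hmt⟩ := muAny_ret h w hmu hwi
        have hss : s0 = s := by
          rw [hk] at hks
          injection hks with hh
          exact hh.symm
        rw [hss] at hmt
        obtain ⟨g', a'', hwj, hpush', hps1, hpsi⟩ :=
          matched_stack h M w f hmt hstepall
        rcases hpop with ⟨g0, hpt, hcons⟩ | ⟨-, hnil, -⟩
        · rw [hpsi] at hcons
          obtain ⟨hg0, htail⟩ := List.cons.inj hcons
          refine Or.inl ⟨j, hmu, ?_⟩
          show (toMNWA h M).delta2 _ _ _ _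
          refine ⟨g', ?_, ?_, osym_ret h w hwi hk⟩
          · obtain ⟨-, -, ⟨a3, hwj3, hac3⟩, -, -⟩ := hmt
            have ha3 : a3 = a'' := by
              rw [hwj] at hwj3
              exact (Option.some.inj hwj3).symm
            have hkj : h.kind a'' = .call s := ha3 ▸ hac3
            show osym h w f j = some g'
            rw [osym_call h w hwj hkj, hps1]
            rfl
          · rw [hg0]
            exact hpt
        · rw [hpsi] at hnil
          exact absurd hnil (by simp)
      · refine Or.inr ⟨hm, ?_⟩
        show (toMNWA h M).delta1 _ _ _
        simp only [toMNWA, hk]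
        have hempty : (f (i+1)).2 s = [] :=
          unmatched_empty h M w f hwi hk hm (h0 s) hstepall
        rcases hpop with ⟨g, -, hcons⟩ | ⟨hpt, -, -⟩
        · rw [hempty] at hcons
          exact absurd hcons (by simp)
        · exact ⟨hpt, osym_ret h w hwi hk⟩
    · refine Or.inr ⟨not_muAny_of_kind h w hwi
        (fun s' hks => by rw [hk] at hks; exact nomatch hks), ?_⟩
      show (toMNWA h M).delta1 _ _ _
      simp only [toMNWA, hk]
      exact ⟨hint, osym_int h w hwi hk⟩
  · -- final state
    show (f (w.length - 1 + 1)).1 ∈ M.qF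
    have : w.length - 1 + 1 = w.length := by omega
    rw [this]
    exact hF
  · intro i _ hmem
    exact absurd hmem (by simp [toMNWA])

/-- Soundness of `toMNWA`. -/
lemma mem_gLang_vAccepts (h : CRAlphabet K A) (M : MVPA K A Q Γ) (w : List A)
    (hg : w ∈ gLang h (toMNWA h M)) : vAccepts h M w := by
  obtain ⟨hw, ρ, ⟨hr1, hr2⟩, hacc1, -⟩ := hg
  obtain ⟨q0, hq0I, a0, hwa0, hd10⟩ := hr1
  have hlen : 0 < w.length := List.length_pos_iff.mpr hw
  let ps : ℕ → Option Γ := fun t => (ρ t).2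
  let F : ℕ → Q × (Fin K → List Γ) :=
    fun i => (mkState q0.1 (fun t => (ρ t).1) i, mkSt h w ps i)
  have main : ∀ i, ∀ a, w[i]? = some a → vStep h M a (F i) (F (i+1)) := by
    intro i
    induction i using Nat.strong_induction_on with
    | _ i IH =>
    rcases i with _ | i
    · intro a hwi
      have ha0 : a0 = a := by rw [hwi] at hwa0; exact (Option.some.inj hwa0).symm
      rw [ha0] at hd10
      cases hkind : h.kind a with
      | call s =>
        simp only [toMNWA, hkind] at hd10
        obtain ⟨g, hg, hpush⟩ := hd10
        obtain ⟨hc1, hc2⟩ := mkSt_call h w ps hwi hkind hg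
        exact Or.inl ⟨s, hkind, g, hpush, hc1, hc2⟩
      | ret s =>
        simp only [toMNWA, hkind] at hd10
        obtain ⟨hpop, -⟩ := hd10
        refine Or.inr (Or.inl ⟨s, hkind, (mkSt_ret h w ps hwi hkind).2,
          Or.inr ⟨hpop, rfl, ?_⟩⟩)
        show mkSt h w ps 1 s = []
        rw [(mkSt_ret h w ps hwi hkind).1]
        rfl
      | int =>
        simp only [toMNWA, hkind] at hd10
        obtain ⟨hint, -⟩ := hd10
        refine Or.inr (Or.inr ⟨hkind, hint, ?_⟩)
        funext s
        exact mkSt_int h w ps hwi hkind s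
    · intro a hwi
      have hilen : i + 1 < w.length := getElem?_some_len hwi
      obtain ⟨a', hwa', hbr⟩ := hr2 (i+1) (Nat.succ_pos i) hilen
      have haa : a' = a := by rw [hwi] at hwa'; exact (Option.some.inj hwa').symm
      rw [haa] at hbr
      cases hkind : h.kind a with
      | call s =>
        have hd1 : (toMNWA h M).delta1 (ρ i) a (ρ (i+1)) := by
          rcases hbr with ⟨j, hmu, -⟩ | ⟨-, hd⟩
          · obtain ⟨s', hks, -⟩ := muAny_ret h w hmu hwi
            rw [hkind] at hks
            exact nomatch hks
          · exact hd
        simp only [toMNWA, hkind] at hd1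
        obtain ⟨g, hg, hpush⟩ := hd1
        obtain ⟨hc1, hc2⟩ := mkSt_call h w ps hwi hkind hg
        exact Or.inl ⟨s, hkind, g, hpush, hc1, hc2⟩
      | ret s =>
        by_cases hm : ∃ j, MuAny h w j (i+1)
        · rcases hbr with ⟨j, hmu, hd2⟩ | ⟨hnm, -⟩
          swap
          · exact absurd hm hnm
          obtain ⟨g, hgj, hpop, -⟩ := hd2
          obtain ⟨s0, hks, hmt⟩ := muAny_ret h w hmu hwi
          have hss : s0 = s := by
            rw [hkind] at hks
            injection hks with hh
            exact hh.symm
          rw [hss] at hmt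
          obtain ⟨g', a'', hwj, hpush', hps1, hpsi⟩ :=
            matched_stack h M w F hmt (fun t ht a' ha' => IH t ht a' ha')
          obtain ⟨-, -, ⟨a3, hwj3, hac3⟩, -, -⟩ := hmt
          have ha3 : a3 = a'' := by
            rw [hwj] at hwj3
            exact (Option.some.inj hwj3).symm
          have hkj : h.kind a'' = .call s := ha3 ▸ hac3
          obtain ⟨hcall1, -⟩ := mkSt_call h w ps hwj hkj hgj
          have hps1' : mkSt h w ps (j+1) s = g' :: mkSt h w ps j s := hps1
          have hgg : g = g' := by
            rw [hcall1] at hps1'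
            exact (List.cons.inj hps1').1
          refine Or.inr (Or.inl ⟨s, hkind, (mkSt_ret h w ps hwi hkind).2,
            Or.inl ⟨g', hgg ▸ hpop, ?_⟩⟩)
          have hpsi' : mkSt h w ps (i+1) s = g' :: mkSt h w ps j s := hpsi
          show mkSt h w ps (i+1) s = g' :: mkSt h w ps (i+2) s
          rw [show mkSt h w ps (i+2) s = (mkSt h w ps (i+1) s).tail from
            (mkSt_ret h w ps hwi hkind).1, hpsi']
          rfl
        · have hd1 : (toMNWA h M).delta1 (ρ i) a (ρ (i+1)) := by
            rcases hbr with ⟨j, hmu, -⟩ | ⟨-, hd⟩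
            · exact absurd ⟨j, hmu⟩ hm
            · exact hd
          simp only [toMNWA, hkind] at hd1
          obtain ⟨hpop, -⟩ := hd1
          have hempty : (F (i+1)).2 s = [] :=
            unmatched_empty h M w F hwi hkind hm rfl
              (fun t ht a' ha' => IH t ht a' ha')
          refine Or.inr (Or.inl ⟨s, hkind, (mkSt_ret h w ps hwi hkind).2,
            Or.inr ⟨hpop, hempty, ?_⟩⟩)
          show mkSt h w ps (i+2) s = []
          rw [(mkSt_ret h w ps hwi hkind).1]
          have : mkSt h w ps (i+1) s = [] := hempty
          rw [this]
          rfl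
      | int =>
        have hd1 : (toMNWA h M).delta1 (ρ i) a (ρ (i+1)) := by
          rcases hbr with ⟨j, hmu, -⟩ | ⟨-, hd⟩
          · obtain ⟨s', hks, -⟩ := muAny_ret h w hmu hwi
            rw [hkind] at hks
            exact nomatch hks
          · exact hd
        simp only [toMNWA, hkind] at hd1
        obtain ⟨hint, -⟩ := hd1
        refine Or.inr (Or.inr ⟨hkind, hint, ?_⟩)
        funext s
        exact mkSt_int h w ps hwi hkind s
  refine ⟨F, hq0I, fun s => rfl, main, ?_⟩
  obtain ⟨n, hn⟩ : ∃ n, w.length = n + 1 := ⟨w.length - 1, by omega⟩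
  have h1 : (F w.length).1 = (ρ (w.length - 1)).1 := by
    rw [hn]
    rfl
  rw [h1]
  exact hacc1

lemma gLang_toMNWA_eq (h : CRAlphabet K A) (M : MVPA K A Q Γ) :
    gLang h (toMNWA h M) = vLang h M :=
  Set.ext fun w =>
    ⟨fun hg => ⟨hg.1, mem_gLang_vAccepts h M w hg⟩,
     fun hv => vAccepts_mem_gLang h M w hv.1 hv.2⟩

/-- Completeness of `toMVPA`. -/
lemma mem_gLang_toMVPA (h : CRAlphabet K A) (B : GMNWA K A Q) (w : List A)
    (hg : w ∈ gLang h B) : vAccepts h (toMVPA B) w := by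
  obtain ⟨hw, ρ, ⟨hr1, hr2⟩, hacc1, -⟩ := hg
  obtain ⟨q0, hq0I, a0, hwa0, hd10⟩ := hr1
  have hlen : 0 < w.length := List.length_pos_iff.mpr hw
  let ps : ℕ → Option Q := fun t => some (ρ t)
  let F : ℕ → Q × (Fin K → List Q) :=
    fun i => (mkState q0 ρ i, mkSt h w ps i)
  have main : ∀ i, ∀ a, w[i]? = some a → vStep h (toMVPA B) a (F i) (F (i+1)) := by
    intro i
    induction i using Nat.strong_induction_on with
    | _ i IH =>
    rcases i with _ | i
    · intro a hwi
      have ha0 : a0 = a := by rw [hwi] at hwa0; exact (Option.some.inj hwa0).symm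
      rw [ha0] at hd10
      cases hkind : h.kind a with
      | call s =>
        obtain ⟨hc1, hc2⟩ := mkSt_call h w ps hwi hkind rfl
        exact Or.inl ⟨s, hkind, ρ 0, ⟨hd10, rfl⟩, hc1, hc2⟩
      | ret s =>
        refine Or.inr (Or.inl ⟨s, hkind, (mkSt_ret h w ps hwi hkind).2,
          Or.inr ⟨hd10, rfl, ?_⟩⟩)
        show mkSt h w ps 1 s = []
        rw [(mkSt_ret h w ps hwi hkind).1]
        rfl
      | int =>
        refine Or.inr (Or.inr ⟨hkind, hd10, ?_⟩)
        funext s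
        exact mkSt_int h w ps hwi hkind s
    · intro a hwi
      have hilen : i + 1 < w.length := getElem?_some_len hwi
      obtain ⟨a', hwa', hbr⟩ := hr2 (i+1) (Nat.succ_pos i) hilen
      have haa : a' = a := by rw [hwi] at hwa'; exact (Option.some.inj hwa').symm
      rw [haa] at hbr
      cases hkind : h.kind a with
      | call s =>
        have hd1 : B.delta1 (ρ i) a (ρ (i+1)) := by
          rcases hbr with ⟨j, hmu, -⟩ | ⟨-, hd⟩
          · obtain ⟨s', hks, -⟩ := muAny_ret h w hmu hwi
            rw [hkind] at hks
            exact nomatch hks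
          · exact hd
        obtain ⟨hc1, hc2⟩ := mkSt_call h w ps hwi hkind rfl
        exact Or.inl ⟨s, hkind, ρ (i+1), ⟨hd1, rfl⟩, hc1, hc2⟩
      | ret s =>
        by_cases hm : ∃ j, MuAny h w j (i+1)
        · rcases hbr with ⟨j, hmu, hd2⟩ | ⟨hnm, -⟩
          swap
          · exact absurd hm hnm
          obtain ⟨s0, hks, hmt⟩ := muAny_ret h w hmu hwi
          have hss : s0 = s := by
            rw [hkind] at hks
            injection hks with hh
            exact hh.symm
          rw [hss] at hmt
          obtain ⟨g', a'', hwj, hpush', hps1, hpsi⟩ :=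
            matched_stack h (toMVPA B) w F hmt (fun t ht a' ha' => IH t ht a' ha')
          have hgρ : g' = ρ j := by
            have := hpush'.2
            rw [this]
            rfl
          refine Or.inr (Or.inl ⟨s, hkind, (mkSt_ret h w ps hwi hkind).2,
            Or.inl ⟨g', ?_, ?_⟩⟩)
          · show (toMVPA B).popT (F (i+1)).1 a (some g') (F (i+2)).1
            show B.delta2 g' (F (i+1)).1 a (F (i+2)).1
            rw [hgρ]
            exact hd2
          · have hpsi' : mkSt h w ps (i+1) s = g' :: mkSt h w ps j s := hpsi
            show mkSt h w ps (i+1) s = g' :: mkSt h w ps (i+2) s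
            rw [show mkSt h w ps (i+2) s = (mkSt h w ps (i+1) s).tail from
              (mkSt_ret h w ps hwi hkind).1, hpsi']
            rfl
        · have hd1 : B.delta1 (ρ i) a (ρ (i+1)) := by
            rcases hbr with ⟨j, hmu, -⟩ | ⟨-, hd⟩
            · exact absurd ⟨j, hmu⟩ hm
            · exact hd
          have hempty : (F (i+1)).2 s = [] :=
            unmatched_empty h (toMVPA B) w F hwi hkind hm rfl
              (fun t ht a' ha' => IH t ht a' ha')
          refine Or.inr (Or.inl ⟨s, hkind, (mkSt_ret h w ps hwi hkind).2,
            Or.inr ⟨hd1, hempty, ?_⟩⟩)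
          show mkSt h w ps (i+2) s = []
          rw [(mkSt_ret h w ps hwi hkind).1]
          have : mkSt h w ps (i+1) s = [] := hempty
          rw [this]
          rfl
      | int =>
        have hd1 : B.delta1 (ρ i) a (ρ (i+1)) := by
          rcases hbr with ⟨j, hmu, -⟩ | ⟨-, hd⟩
          · obtain ⟨s', hks, -⟩ := muAny_ret h w hmu hwi
            rw [hkind] at hks
            exact nomatch hks
          · exact hd
        refine Or.inr (Or.inr ⟨hkind, hd1, ?_⟩)
        funext s
        exact mkSt_int h w ps hwi hkind s
  refine ⟨F, hq0I, fun s => rfl, main, ?_⟩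
  obtain ⟨n, hn⟩ : ∃ n, w.length = n + 1 := ⟨w.length - 1, by omega⟩
  have h1 : (F w.length).1 = ρ (w.length - 1) := by
    rw [hn]
    rfl
  rw [h1]
  exact hacc1

/-- Soundness of `toMVPA`. -/
lemma vAccepts_toMVPA_mem (h : CRAlphabet K A) (B : GMNWA K A Q) (w : List A)
    (hC : B.qC = ∅) (hw : w ≠ []) (ha : vAccepts h (toMVPA B) w) :
    w ∈ gLang h B := by
  obtain ⟨f, hI, h0, hstep, hF⟩ := ha
  have hlen : 0 < w.length := List.length_pos_iff.mpr hw
  refine ⟨hw, fun i => (f (i+1)).1, ⟨?_, ?_⟩, ?_, ?_⟩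
  · have hw0 : w[0]? = some w[0] := List.getElem?_eq_getElem hlen
    refine ⟨(f 0).1, hI, w[0], hw0, ?_⟩
    rcases hstep 0 w[0] hw0 with ⟨s, hk, g, hpush, -, -⟩ | ⟨s, hk, -, hpop⟩ |
        ⟨hk, hint, -⟩
    · exact hpush.1
    · rcases hpop with ⟨g, -, hcons⟩ | ⟨hpt, -, -⟩
      · rw [h0 s] at hcons
        exact absurd hcons (by simp)
      · exact hpt
    · exact hint
  · intro i hi0 hilen
    have hwi : w[i]? = some w[i] := List.getElem?_eq_getElem hilen
    refine ⟨w[i], hwi, ?_⟩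
    obtain ⟨i, rfl⟩ : ∃ i', i = i' + 1 := ⟨i - 1, by omega⟩
    have hstepall : ∀ t, t < i + 1 → ∀ a, w[t]? = some a →
        vStep h (toMVPA B) a (f t) (f (t+1)) := fun t _ a hta => hstep t a hta
    by_cases hm : ∃ j, MuAny h w j (i+1)
    · obtain ⟨j, hmu⟩ := hm
      obtain ⟨s0, hks, hmt⟩ := muAny_ret h w hmu hwi
      obtain ⟨g', a'', hwj, hpush', hps1, hpsi⟩ :=
        matched_stack h (toMVPA B) w f hmt hstepall
      have hgρ : g' = (f (j+1)).1 := hpush'.2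
      rcases hstep (i+1) w[i+1] hwi with ⟨s', hk', -, -, -⟩ |
          ⟨s', hk', -, hpop⟩ | ⟨hk', -, -⟩
      · rw [hks] at hk'
        exact absurd hk' (by intro hh; exact nomatch hh)
      · have hss : s' = s0 := by
          rw [hks] at hk'
          injection hk' with hh
          exact hh.symm
        rw [hss] at hpop
        rcases hpop with ⟨g0, hpt, hcons⟩ | ⟨-, hnil, -⟩
        · rw [hpsi] at hcons
          obtain ⟨hg0, -⟩ := List.cons.inj hcons
          refine Or.inl ⟨j, hmu, ?_⟩
          have hpt' : B.delta2 g0 (f (i+1)).1 w[i+1] (f (i+2)).1 := hpt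
          rw [← hg0, hgρ] at hpt'
          exact hpt'
        · rw [hpsi] at hnil
          exact absurd hnil (by simp)
      · rw [hks] at hk'
        exact absurd hk' (by intro hh; exact nomatch hh)
    · refine Or.inr ⟨hm, ?_⟩
      rcases hstep (i+1) w[i+1] hwi with ⟨s', hk', g, hpush, -, -⟩ |
          ⟨s', hk', -, hpop⟩ | ⟨hk', hint, -⟩
      · exact hpush.1
      · have hempty : (f (i+1)).2 s' = [] :=
          unmatched_empty h (toMVPA B) w f hwi hk' hm (h0 s') hstepall
        rcases hpop with ⟨g, -, hcons⟩ | ⟨hpt, -, -⟩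
        · rw [hempty] at hcons
          exact absurd hcons (by simp)
        · exact hpt
      · exact hint
  · show (f (w.length - 1 + 1)).1 ∈ B.qF
    have : w.length - 1 + 1 = w.length := by omega
    rw [this]
    exact hF
  · intro i _ hmem
    rw [hC] at hmem
    exact absurd hmem (Set.notMem_empty _)

lemma vLang_toMVPA_eq (h : CRAlphabet K A) (B : GMNWA K A Q) (hC : B.qC = ∅) :
    vLang h (toMVPA B) = gLang h B :=
  Set.ext fun w =>
    ⟨fun hv => vAccepts_toMVPA_mem h B w hC hv.1 hv.2,
     fun hg => ⟨hg.1, mem_gLang_toMVPA h B w hg⟩⟩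

end Main

end Stmt8Aux

/-- MVPA and MNWA are expressively equivalent: a set `L` of
nested words over a `K`-stack call-return alphabet is recognized by some
(finite) multi-stack visibly pushdown automaton iff it is recognized by some
(finite) multi-stack nested-word automaton (i.e. with no calling states). -/
theorem stmt8 {K : ℕ} {A : Type} (h : CRAlphabet K A) (L : Set (List A)) :
    (∃ (Q Γ : Type) (_ : Fintype Q) (_ : Fintype Γ) (M : MVPA K A Q Γ),
        vLang h M = L) ↔
    (∃ (Q : Type) (_ : Fintype Q) (B : GMNWA K A Q),
        B.qC = ∅ ∧ gLang h B = L) := by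
  constructor
  · rintro ⟨Q, Γ, fQ, fΓ, M, rfl⟩
    letI := fQ
    letI := fΓ
    exact ⟨Q × Option Γ, inferInstance, Stmt8Aux.toMNWA h M, rfl,
      Stmt8Aux.gLang_toMNWA_eq h M⟩
  · rintro ⟨Q, fQ, B, hC, rfl⟩
    exact ⟨Q, Q, fQ, fQ, Stmt8Aux.toMVPA B, Stmt8Aux.vLang_toMVPA_eq h B hC⟩
end
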